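/- Let δ > 0 and m > 0. Define ω₂ := sup over real μ ≥ m of max{Re λ : λ² + δμ²λ + μ² = 0}. Then ω₂ ≤ −min{1/δ, δm²/2} < 0. In particular, the set of all roots of these quadratics as μ ranges over [m, ∞) is contained in the closed half-plane {λ ∈ ℂ : Re λ ≤ −min{1/δ, δm²/2}}. -/
import Mathlib

lemma root_re_bound (δ m μ : ℝ) (hδ : 0 < δ) (hm : 0 < m) (hμ : m ≤ μ)
    (lam : ℂ) (h : lam^2 + (δ:ℂ) * (μ:ℂ)^2 * lam + (μ:ℂ)^2 = 0) :
    lam.re ≤ -min (1/δ) (δ * m^2 / 2) := by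
  have hμ0 : 0 < μ := lt_of_lt_of_le hm hμ
  set a := lam.re
  set b := lam.im
  have hre : a^2 - b^2 + δ * μ^2 * a + μ^2 = 0 := by
    have := congrArg Complex.re h
    simp [Complex.add_re, Complex.mul_re, Complex.mul_im, pow_two] at this
    ring_nf at this ⊢
    linarith [this]
  have him : b * (2*a + δ * μ^2) = 0 := by
    have := congrArg Complex.im h
    simp [Complex.add_im, Complex.mul_re, Complex.mul_im, pow_two] at this
    ring_nf at this ⊢
    linarith [this]
  rcases mul_eq_zero.mp him with hb | ha
  · -- b = 0 : real root, show a ≤ -1/δ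
    have h1 : a^2 + δ * μ^2 * a + μ^2 = 0 := by
      rw [hb] at hre; linarith [hre]
    have key : δ * a + 1 ≤ 0 := by
      by_contra hcon
      push_neg at hcon
      nlinarith [sq_nonneg a, mul_pos (mul_pos hδ (mul_pos hμ0 hμ0)) hcon]
    have h2 : a ≤ -(1/δ) := by
      rw [le_neg, div_le_iff₀ hδ]
      nlinarith
    calc a ≤ -(1/δ) := h2
      _ ≤ -min (1/δ) (δ * m^2 / 2) := by
          apply neg_le_neg; exact min_le_left _ _
  · -- 2a + δμ² = 0
    have h2 : a = -(δ * μ^2)/2 := by linarith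
    have hsq : m^2 ≤ μ^2 := pow_le_pow_left₀ hm.le hμ 2
    have : δ * m^2 / 2 ≤ δ * μ^2 / 2 := by nlinarith
    calc a ≤ -(δ * m^2 / 2) := by rw [h2]; linarith
      _ ≤ -min (1/δ) (δ * m^2 / 2) := by
          apply neg_le_neg; exact min_le_right _ _

theorem roots_halfplane_bound (δ m : ℝ) (hδ : 0 < δ) (hm : 0 < m) :
    (-min (1/δ) (δ * m^2 / 2) < 0) ∧
    sSup {x : ℝ | ∃ μ : ℝ, m ≤ μ ∧ ∃ lam : ℂ,
        lam^2 + (δ:ℂ) * (μ:ℂ)^2 * lam + (μ:ℂ)^2 = 0 ∧ x = lam.re}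
      ≤ -min (1/δ) (δ * m^2 / 2) ∧
    ∀ (μ : ℝ), m ≤ μ → ∀ lam : ℂ,
      lam^2 + (δ:ℂ) * (μ:ℂ)^2 * lam + (μ:ℂ)^2 = 0 →
      lam.re ≤ -min (1/δ) (δ * m^2 / 2) := by
  refine ⟨?_, ?_, fun μ hμ lam h => root_re_bound δ m μ hδ hm hμ lam h⟩
  · have h1 : 0 < min (1/δ) (δ * m^2 / 2) :=
      lt_min (by positivity) (by positivity)
    linarith
  · apply csSup_le
    · -- nonempty: a root exists for μ = m
      obtain ⟨s, hs⟩ : ∃ s : ℂ, s^2 = ((δ:ℂ)*(m:ℂ)^2)^2 - 4*(m:ℂ)^2 := by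
        rcases IsAlgClosed.exists_pow_nat_eq (((δ:ℂ)*(m:ℂ)^2)^2 - 4*(m:ℂ)^2) two_pos with ⟨s, hs⟩
        exact ⟨s, hs⟩
      refine ⟨_, m, le_refl m, (-(δ:ℂ)*(m:ℂ)^2 + s)/2, ?_, rfl⟩
      linear_combination hs/4
    · rintro x ⟨μ, hμ, lam, h, rfl⟩
      exact root_re_bound δ m μ hδ hm hμ lam h
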